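/- arXiv:2101.09326 — 2 statements merged into one kernel-verified Lean document; each statement's English description precedes it below -/
import Mathlib

section
/- Let X and Y be connected finite polyhedra and let f: X → D_n(Y) be an n-valued map. Then the first-coordinate projection q: Γ_f → X, q(x,y) = x, is a covering map all of whose fibers q^{-1}(x) = {x} × f(x) have exactly n points; in particular the pair (F, q), where F(x,y) = y, is a finite-valued map of cardinality at most n in the sense of Crabb. -/
open Function Set

/-- The ordered configuration space of `n` points in `Y`. -/
def OrdConf (n : ℕ) (Y : Type*) [TopologicalSpace Y] : Type _ :=
  {y : Fin n → Y // Function.Injective y}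

instance (n : ℕ) (Y : Type*) [TopologicalSpace Y] : TopologicalSpace (OrdConf n Y) :=
  instTopologicalSpaceSubtype

/-- Two ordered configurations are equivalent when they differ by a permutation. -/
def confSetoid (n : ℕ) (Y : Type*) [TopologicalSpace Y] : Setoid (OrdConf n Y) where
  r a b := ∃ σ : Equiv.Perm (Fin n), a.1 ∘ σ = b.1
  iseqv := by
    constructor
    · intro a; exact ⟨Equiv.refl _, rfl⟩
    · rintro a b ⟨σ, h⟩
      refine ⟨σ.symm, funext fun i => ?_⟩
      have := congrFun h (σ.symm i)
      simpa using this.symm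
    · rintro a b c ⟨σ, h1⟩ ⟨τ, h2⟩
      refine ⟨τ.trans σ, funext fun i => ?_⟩
      have h1' := congrFun h1 (τ i)
      have h2' := congrFun h2 i
      simp only [Function.comp_apply] at h1' h2' ⊢
      simp [Equiv.trans_apply, h1', h2']

/-- The unordered configuration space `D_n(Y)` of `n` points in `Y`,
with the quotient topology. -/
def UnordConf (n : ℕ) (Y : Type*) [TopologicalSpace Y] : Type _ :=
  Quotient (confSetoid n Y)

instance (n : ℕ) (Y : Type*) [TopologicalSpace Y] : TopologicalSpace (UnordConf n Y) :=
  instTopologicalSpaceQuotient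

/-- The underlying `n`-element subset of `Y` determined by an unordered configuration. -/
def UnordConf.values {n : ℕ} {Y : Type*} [TopologicalSpace Y] : UnordConf n Y → Set Y :=
  Quotient.lift (fun a => Set.range a.1) (by
    rintro a b ⟨σ, h⟩
    show Set.range a.1 = Set.range b.1
    rw [← h, Set.range_comp]
    simp)

/-- An `n`-valued map from `X` to `Y` is a continuous map `X → D_n(Y)`. -/
abbrev NValuedMap (X Y : Type*) [TopologicalSpace X] [TopologicalSpace Y] (n : ℕ) :=
  C(X, UnordConf n Y)

/-- `g` is a submap of `f` when `g(x) ⊆ f(x)` for all `x`. -/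
def IsSubmap {X Y : Type*} [TopologicalSpace X] [TopologicalSpace Y] {k n : ℕ}
    (g : NValuedMap X Y k) (f : NValuedMap X Y n) : Prop :=
  ∀ x : X, (g x).values ⊆ (f x).values

/-- An `n`-valued map is irreducible when it admits no proper (`k`-valued, `0 < k < n`) submap. -/
def IsIrreducibleNV {X Y : Type*} [TopologicalSpace X] [TopologicalSpace Y] {n : ℕ}
    (f : NValuedMap X Y n) : Prop :=
  ¬ ∃ (k : ℕ) (g : NValuedMap X Y k), 0 < k ∧ k < n ∧ IsSubmap g f

/-- A partition of an `n`-valued map `f` into `l` multimaps: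
a family of `kᵢ`-valued maps with `k₁ + ⋯ + k_l = n` whose values unite to those of `f`. -/
structure NVPartition {X Y : Type*} [TopologicalSpace X] [TopologicalSpace Y] {n : ℕ}
    (f : NValuedMap X Y n) (l : ℕ) where
  card : Fin l → ℕ
  card_pos : ∀ i, 0 < card i
  maps : ∀ i, NValuedMap X Y (card i)
  sum_card : ∑ i, card i = n
  values_eq : ∀ x : X, (f x).values = ⋃ i, UnordConf.values ((maps i) x)

/-- A partition is into irreducibles when every member is irreducible. -/
def NVPartition.IsIrreduciblePartition {X Y : Type*} [TopologicalSpace X] [TopologicalSpace Y]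
    {n : ℕ} {f : NValuedMap X Y n} {l : ℕ} (P : NVPartition f l) : Prop :=
  ∀ i, IsIrreducibleNV (P.maps i)

/-- A space is a (compact) finite polyhedron when it is homeomorphic to the underlying
space of a finite simplicial complex in some Euclidean space. -/
def IsFinitePolyhedron (X : Type*) [TopologicalSpace X] : Prop :=
  ∃ (N : ℕ) (K : Geometry.SimplicialComplex ℝ (EuclideanSpace ℝ (Fin N))),
    K.faces.Finite ∧ Nonempty (X ≃ₜ K.space)
/-- The graph of an `n`-valued map, as a subspace of `X × Y`. -/
def NVGraph {X Y : Type*} [TopologicalSpace X] [TopologicalSpace Y] {n : ℕ}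
    (f : NValuedMap X Y n) : Type _ :=
  {p : X × Y // p.2 ∈ UnordConf.values (f p.1)}

instance {X Y : Type*} [TopologicalSpace X] [TopologicalSpace Y] {n : ℕ}
    (f : NValuedMap X Y n) : TopologicalSpace (NVGraph f) :=
  instTopologicalSpaceSubtype

/-- First-coordinate projection of the graph. -/
def NVGraph.q {X Y : Type*} [TopologicalSpace X] [TopologicalSpace Y] {n : ℕ}
    {f : NValuedMap X Y n} (z : NVGraph f) : X := z.1.1

/-- Second-coordinate projection of the graph. -/
def NVGraph.F {X Y : Type*} [TopologicalSpace X] [TopologicalSpace Y] {n : ℕ}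
    {f : NValuedMap X Y n} (z : NVGraph f) : Y := z.1.2

section NVCoverAux

variable {X Y : Type*} [TopologicalSpace X] [TopologicalSpace Y] {n : ℕ}

lemma NVCover.values_mk (b : OrdConf n Y) :
    UnordConf.values (Quotient.mk (confSetoid n Y) b) = Set.range b.1 := rfl

/-- The saturated open set of ordered configurations hitting each `V i` (in some order). -/
def NVCover.sat (V : Fin n → Set Y) : Set (OrdConf n Y) :=
  {b | ∃ σ : Equiv.Perm (Fin n), ∀ i, b.1 (σ i) ∈ V i}

/-- The basic open set in `X` over which the graph trivializes. -/
def NVCover.goodU (f : NValuedMap X Y n) (V : Fin n → Set Y) : Set X :=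
  {x | ∃ b : OrdConf n Y, Quotient.mk (confSetoid n Y) b = f x ∧ ∀ i, b.1 i ∈ V i}

lemma NVCover.goodU_mono (f : NValuedMap X Y n) {V V' : Fin n → Set Y}
    (h : ∀ i, V' i ⊆ V i) : NVCover.goodU f V' ⊆ NVCover.goodU f V := by
  rintro x ⟨b, hb1, hb2⟩
  exact ⟨b, hb1, fun i => h i (hb2 i)⟩

lemma NVCover.sat_isOpen {V : Fin n → Set Y} (hV : ∀ i, IsOpen (V i)) :
    IsOpen (NVCover.sat V) := by
  have : NVCover.sat V =
      ⋃ σ : Equiv.Perm (Fin n), ⋂ i, (fun b : OrdConf n Y => b.1 (σ i)) ⁻¹' V i := by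
    ext b
    simp [NVCover.sat, Set.mem_iUnion, Set.mem_iInter]
  rw [this]
  refine isOpen_iUnion fun σ => isOpen_iInter_of_finite fun i => (hV i).preimage ?_
  exact (continuous_apply (σ i)).comp continuous_subtype_val

lemma NVCover.preimage_image_sat (V : Fin n → Set Y) :
    Quotient.mk (confSetoid n Y) ⁻¹' (Quotient.mk (confSetoid n Y) '' NVCover.sat V)
      = NVCover.sat V := by
  apply Set.Subset.antisymm
  · rintro b ⟨c, ⟨σ, hσ⟩, hc⟩
    obtain ⟨τ, hτ⟩ := Quotient.exact hc
    refine ⟨σ.trans τ.symm, fun i => ?_⟩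
    have : c.1 (τ (τ.symm (σ i))) = b.1 (τ.symm (σ i)) := congrFun hτ (τ.symm (σ i))
    simp only [Equiv.apply_symm_apply] at this
    simpa [Equiv.trans_apply, ← this] using hσ i
  · intro b hb
    exact ⟨b, hb, rfl⟩

lemma NVCover.goodU_eq (f : NValuedMap X Y n) (V : Fin n → Set Y) :
    NVCover.goodU f V = f ⁻¹' (Quotient.mk (confSetoid n Y) '' NVCover.sat V) := by
  ext x
  constructor
  · rintro ⟨b, hb1, hb2⟩
    exact ⟨b, ⟨Equiv.refl _, fun i => hb2 i⟩, hb1⟩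
  · rintro ⟨c, ⟨σ, hσ⟩, hc⟩
    refine ⟨⟨c.1 ∘ σ, c.2.comp σ.injective⟩, ?_, fun i => hσ i⟩
    rw [← hc]
    exact Quot.sound ⟨σ.symm, by ext i; simp⟩

lemma NVCover.goodU_isOpen (f : NValuedMap X Y n) {V : Fin n → Set Y}
    (hV : ∀ i, IsOpen (V i)) : IsOpen (NVCover.goodU f V) := by
  rw [NVCover.goodU_eq]
  refine IsOpen.preimage f.continuous ?_
  have hqm : Topology.IsQuotientMap (Quotient.mk (confSetoid n Y)) :=
    isQuotientMap_quotient_mk' (s := confSetoid n Y)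
  refine hqm.isOpen_preimage.mp ?_
  refine (congrArg IsOpen (NVCover.preimage_image_sat V)).mpr ?_
  exact NVCover.sat_isOpen hV

/-- The distinguished point of `f x` lying in `V i`, for `x ∈ goodU f V`. -/
noncomputable def NVCover.pt (f : NValuedMap X Y n) {V : Fin n → Set Y} {x : X}
    (hx : x ∈ NVCover.goodU f V) : Fin n → Y :=
  hx.choose.1

lemma NVCover.pt_mem_V (f : NValuedMap X Y n) {V : Fin n → Set Y} {x : X}
    (hx : x ∈ NVCover.goodU f V) (i : Fin n) : NVCover.pt f hx i ∈ V i :=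
  hx.choose_spec.2 i

lemma NVCover.values_eq_range_pt (f : NValuedMap X Y n) {V : Fin n → Set Y} {x : X}
    (hx : x ∈ NVCover.goodU f V) :
    UnordConf.values (f x) = Set.range (NVCover.pt f hx) := by
  rw [← hx.choose_spec.1]
  rfl

lemma NVCover.val_unique (f : NValuedMap X Y n) {V : Fin n → Set Y}
    (hd : Pairwise (Function.onFun Disjoint V)) {x : X}
    (hx : x ∈ NVCover.goodU f V) {y : Y} (hy : y ∈ UnordConf.values (f x)) {i : Fin n}
    (hyV : y ∈ V i) : y = NVCover.pt f hx i := by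
  rw [NVCover.values_eq_range_pt f hx] at hy
  obtain ⟨j, rfl⟩ := hy
  rcases eq_or_ne j i with rfl | hne
  · rfl
  · exact absurd (NVCover.pt_mem_V f hx j) fun h => Set.disjoint_left.mp (hd hne) h hyV

lemma NVCover.nonempty_fin {f : NValuedMap X Y n} (z : NVGraph f) : Nonempty (Fin n) := by
  obtain ⟨b, hb⟩ := Quotient.exists_rep (f z.1.1)
  have h2 := z.2
  rw [← hb] at h2
  obtain ⟨i, -⟩ := h2
  exact ⟨i⟩

/-- The index of the member of `V` containing the second coordinate of a graph point. -/
noncomputable def NVCover.idx (f : NValuedMap X Y n) (V : Fin n → Set Y) (z : NVGraph f) :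
    Fin n :=
  letI := Classical.dec (∃ i, z.1.2 ∈ V i)
  if h : ∃ i, z.1.2 ∈ V i then h.choose else Classical.choice (NVCover.nonempty_fin z)

lemma NVCover.idx_spec {f : NValuedMap X Y n} {V : Fin n → Set Y} {z : NVGraph f}
    (h : ∃ i, z.1.2 ∈ V i) : z.1.2 ∈ V (NVCover.idx f V z) := by
  rw [NVCover.idx, dif_pos h]
  exact h.choose_spec

lemma NVCover.idx_eq {f : NValuedMap X Y n} {V : Fin n → Set Y}
    (hd : Pairwise (Function.onFun Disjoint V)) {z : NVGraph f} {j : Fin n}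
    (hj : z.1.2 ∈ V j) : NVCover.idx f V z = j := by
  have h : ∃ i, z.1.2 ∈ V i := ⟨j, hj⟩
  have hmem := NVCover.idx_spec h
  by_contra hne
  exact Set.disjoint_left.mp (hd hne) hmem hj

end NVCoverAux

section NVTriv

variable {X Y : Type*} [TopologicalSpace X] [TopologicalSpace Y] {n : ℕ}

/-- The local section(s) of the graph over `goodU f V`, as a map to `X × Y`. -/
noncomputable def NVCover.secPair (f : NValuedMap X Y n) (V : Fin n → Set Y) (x₀ : X)
    (hx₀ : x₀ ∈ NVCover.goodU f V) : X × Fin n → X × Y := fun p =>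
  letI := Classical.dec (p.1 ∈ NVCover.goodU f V)
  if h : p.1 ∈ NVCover.goodU f V then (p.1, NVCover.pt f h p.2)
  else (x₀, NVCover.pt f hx₀ p.2)

lemma NVCover.secPair_mem (f : NValuedMap X Y n) (V : Fin n → Set Y) (x₀ : X)
    (hx₀ : x₀ ∈ NVCover.goodU f V) (p : X × Fin n) :
    (NVCover.secPair f V x₀ hx₀ p).2 ∈ UnordConf.values (f (NVCover.secPair f V x₀ hx₀ p).1) := by
  simp only [NVCover.secPair]
  split_ifs with h
  · rw [NVCover.values_eq_range_pt f h]; exact ⟨p.2, rfl⟩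
  · rw [NVCover.values_eq_range_pt f hx₀]; exact ⟨p.2, rfl⟩

/-- The local sections of the graph over `goodU f V`. -/
noncomputable def NVCover.sec (f : NValuedMap X Y n) (V : Fin n → Set Y) (x₀ : X)
    (hx₀ : x₀ ∈ NVCover.goodU f V) : X × Fin n → NVGraph f := fun p =>
  ⟨NVCover.secPair f V x₀ hx₀ p, NVCover.secPair_mem f V x₀ hx₀ p⟩

lemma NVCover.sec_pos (f : NValuedMap X Y n) (V : Fin n → Set Y) (x₀ : X)
    (hx₀ : x₀ ∈ NVCover.goodU f V) {p : X × Fin n} (h : p.1 ∈ NVCover.goodU f V) :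
    NVCover.sec f V x₀ hx₀ p =
      ⟨(p.1, NVCover.pt f h p.2), by
        rw [NVCover.values_eq_range_pt f h]; exact ⟨p.2, rfl⟩⟩ := by
  apply Subtype.ext
  show NVCover.secPair f V x₀ hx₀ p = _
  simp only [NVCover.secPair]
  rw [dif_pos h]

/-- The second coordinate of the local sections. -/
noncomputable def NVCover.yfun (f : NValuedMap X Y n) (V : Fin n → Set Y) (z₀ : Fin n → Y) :
    X × Fin n → Y := fun p =>
  letI := Classical.dec (p.1 ∈ NVCover.goodU f V)
  if h : p.1 ∈ NVCover.goodU f V then NVCover.pt f h p.2 else z₀ p.2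

lemma NVCover.continuousAt_yfun (f : NValuedMap X Y n) (V : Fin n → Set Y)
    (hV : ∀ i, IsOpen (V i)) (hd : Pairwise (Function.onFun Disjoint V)) (z₀ : Fin n → Y)
    {x : X} {i : Fin n} (hx : x ∈ NVCover.goodU f V) :
    ContinuousAt (NVCover.yfun f V z₀) (x, i) := by
  rw [continuousAt_def]
  intro A hA
  have hyv : NVCover.yfun f V z₀ (x, i) = NVCover.pt f hx i := by
    simp only [NVCover.yfun]; rw [dif_pos hx]
  rw [hyv] at hA
  obtain ⟨N, hNA, hNopen, hNmem⟩ := mem_nhds_iff.mp hA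
  set V' : Fin n → Set Y := Function.update V i (V i ∩ N) with hV'def
  have hsub : ∀ j, V' j ⊆ V j := by
    intro j
    rcases eq_or_ne j i with rfl | hne
    · simp only [hV'def, Function.update_self]
      exact Set.inter_subset_left
    · simp [hV'def, Function.update_of_ne hne]
  have hV'open : ∀ j, IsOpen (V' j) := by
    intro j
    rcases eq_or_ne j i with rfl | hne
    · simpa only [hV'def, Function.update_self] using (hV j).inter hNopen
    · simpa only [hV'def, Function.update_of_ne hne] using hV j
  have hxU' : x ∈ NVCover.goodU f V' := by
    refine ⟨hx.choose, hx.choose_spec.1, fun j => ?_⟩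
    rcases eq_or_ne j i with rfl | hne
    · simp only [hV'def, Function.update_self]
      exact ⟨hx.choose_spec.2 j, hNmem⟩
    · simpa only [hV'def, Function.update_of_ne hne] using hx.choose_spec.2 j
  rw [mem_nhds_iff]
  refine ⟨NVCover.goodU f V' ×ˢ {i}, ?_,
    (NVCover.goodU_isOpen f hV'open).prod (isOpen_discrete _), ⟨hxU', rfl⟩⟩
  rintro ⟨x', j⟩ ⟨hx'U', hj⟩
  have hij : i = j := (Set.mem_singleton_iff.mp hj).symm
  subst hij
  have hx'U : x' ∈ NVCover.goodU f V := NVCover.goodU_mono f hsub hx'U'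
  have hval : NVCover.yfun f V z₀ (x', i) = NVCover.pt f hx'U i := by
    simp only [NVCover.yfun]; rw [dif_pos hx'U]
  rw [Set.mem_preimage, hval]
  have hci : NVCover.pt f hx'U' i ∈ UnordConf.values (f x') := by
    rw [NVCover.values_eq_range_pt f hx'U']
    exact ⟨i, rfl⟩
  have hciV' : NVCover.pt f hx'U' i ∈ V' i := NVCover.pt_mem_V f hx'U' i
  have heq := NVCover.val_unique f hd hx'U hci (hsub i hciV')
  rw [← heq]
  have hVN : V' i ⊆ N := by
    simp only [hV'def, Function.update_self]
    exact Set.inter_subset_right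
  exact hNA (hVN hciV')

lemma NVCover.continuousAt_sec (f : NValuedMap X Y n) (V : Fin n → Set Y)
    (hV : ∀ i, IsOpen (V i)) (hd : Pairwise (Function.onFun Disjoint V)) (x₀ : X)
    (hx₀ : x₀ ∈ NVCover.goodU f V) {x : X} {i : Fin n} (hx : x ∈ NVCover.goodU f V) :
    ContinuousAt (NVCover.sec f V x₀ hx₀) (x, i) := by
  apply (Topology.IsInducing.subtypeVal : Topology.IsInducing (Subtype.val : NVGraph f → X × Y)).continuousAt_iff.mpr
  have hev : (fun p : X × Fin n => (p.1, NVCover.yfun f V (NVCover.pt f hx₀) p))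
      =ᶠ[nhds (x, i)] (Subtype.val ∘ NVCover.sec f V x₀ hx₀) := by
    filter_upwards [((NVCover.goodU_isOpen f hV).preimage continuous_fst).mem_nhds
      (by exact hx : (x, i).1 ∈ NVCover.goodU f V)] with p hp
    have hp' : p.1 ∈ NVCover.goodU f V := hp
    show _ = NVCover.secPair f V x₀ hx₀ p
    simp only [NVCover.yfun, NVCover.secPair]
    rw [dif_pos hp', dif_pos hp']
  exact (ContinuousAt.prodMk continuousAt_fst
    (NVCover.continuousAt_yfun f V hV hd _ hx)).congr hev

/-- The trivialization of the graph projection over `goodU f V`. -/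
noncomputable def NVCover.triv (f : NValuedMap X Y n) (V : Fin n → Set Y)
    (hV : ∀ i, IsOpen (V i)) (hd : Pairwise (Function.onFun Disjoint V)) (x₀ : X)
    (hx₀ : x₀ ∈ NVCover.goodU f V) :
    Bundle.Trivialization (Fin n) (NVGraph.q (f := f)) where
  toFun := fun z => (z.1.1, NVCover.idx f V z)
  invFun := NVCover.sec f V x₀ hx₀
  source := NVGraph.q (f := f) ⁻¹' NVCover.goodU f V
  target := NVCover.goodU f V ×ˢ Set.univ
  map_source' := fun z hz => ⟨hz, trivial⟩
  map_target' := by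
    rintro ⟨x, i⟩ ⟨hx, -⟩
    show (NVCover.sec f V x₀ hx₀ (x, i)).1.1 ∈ NVCover.goodU f V
    rw [NVCover.sec_pos f V x₀ hx₀ hx]
    exact hx
  left_inv' := by
    intro z hz
    have hz' : z.1.1 ∈ NVCover.goodU f V := hz
    have h2 := z.2
    have hex : ∃ i, z.1.2 ∈ V i := by
      rw [NVCover.values_eq_range_pt f hz'] at h2
      obtain ⟨k, hk⟩ := h2
      exact ⟨k, hk ▸ NVCover.pt_mem_V f hz' k⟩
    have hidx := NVCover.idx_spec hex
    rw [NVCover.sec_pos f V x₀ hx₀ (p := (z.1.1, NVCover.idx f V z)) hz']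
    exact Subtype.ext (Prod.ext rfl (NVCover.val_unique f hd hz' z.2 hidx).symm)
  right_inv' := by
    rintro ⟨x, i⟩ ⟨hx, -⟩
    rw [NVCover.sec_pos f V x₀ hx₀ hx]
    exact Prod.ext rfl (NVCover.idx_eq hd (NVCover.pt_mem_V f hx i))
  open_source := (NVCover.goodU_isOpen f hV).preimage
    (continuous_fst.comp continuous_subtype_val)
  open_target := (NVCover.goodU_isOpen f hV).prod isOpen_univ
  continuousOn_toFun := by
    intro z hz
    refine ContinuousAt.continuousWithinAt ?_
    have hz' : z.1.1 ∈ NVCover.goodU f V := hz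
    have h2 := z.2
    have hex : ∃ i, z.1.2 ∈ V i := by
      rw [NVCover.values_eq_range_pt f hz'] at h2
      obtain ⟨k, hk⟩ := h2
      exact ⟨k, hk ▸ NVCover.pt_mem_V f hz' k⟩
    have hj := NVCover.idx_spec hex
    refine ContinuousAt.prodMk ((continuous_fst.comp continuous_subtype_val).continuousAt) ?_
    have hT : IsOpen {w : NVGraph f | w.1.2 ∈ V (NVCover.idx f V z)} :=
      (hV _).preimage (continuous_snd.comp continuous_subtype_val)
    have hev : ∀ᶠ w in nhds z, NVCover.idx f V w = NVCover.idx f V z := by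
      filter_upwards [hT.mem_nhds hj] with w hw
      exact NVCover.idx_eq hd hw
    exact Filter.Tendsto.mono_right (Filter.tendsto_pure.mpr hev) (pure_le_nhds _)
  continuousOn_invFun := by
    rintro ⟨x, i⟩ ⟨hx, -⟩
    exact (NVCover.continuousAt_sec f V hV hd x₀ hx₀ hx).continuousWithinAt
  baseSet := NVCover.goodU f V
  open_baseSet := NVCover.goodU_isOpen f hV
  source_eq := rfl
  target_eq := rfl
  proj_toFun := fun z _ => rfl

end NVTriv

theorem statement_15 {X Y : Type*} [TopologicalSpace X] [TopologicalSpace Y]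
    [ConnectedSpace X] [ConnectedSpace Y]
    (hX : IsFinitePolyhedron X) (hY : IsFinitePolyhedron Y)
    {n : ℕ} (f : NValuedMap X Y n) :
    IsCoveringMap (NVGraph.q (f := f)) ∧
    (∀ x : X, NVGraph.q (f := f) ⁻¹' {x} = {z : NVGraph f | z.1.1 = x ∧ z.1.2 ∈ UnordConf.values (f x)}) ∧
    (∀ x : X, Nat.card (NVGraph.q (f := f) ⁻¹' {x}) = n) ∧
    Continuous (NVGraph.F (f := f)) := by
  obtain ⟨NY, KY, -, ⟨hYe⟩⟩ := hY
  haveI : T2Space Y := hYe.isEmbedding.t2Space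
  refine ⟨?_, ?_, ?_, continuous_snd.comp continuous_subtype_val⟩
  · -- covering map
    intro x₀
    obtain ⟨a, ha⟩ := Quotient.exists_rep (f x₀)
    obtain ⟨U', hU'⟩ := (Set.finite_range a.1).t2_separation
    set V : Fin n → Set Y := fun i => U' (a.1 i) with hVdef
    have hVopen : ∀ i, IsOpen (V i) := fun i => (hU'.1 (a.1 i)).2
    have hd : Pairwise (Function.onFun Disjoint V) := fun i j hij =>
      hU'.2 ⟨i, rfl⟩ ⟨j, rfl⟩ (a.2.ne hij)
    have hx₀ : x₀ ∈ NVCover.goodU f V := ⟨a, ha, fun i => (hU'.1 (a.1 i)).1⟩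
    exact IsEvenlyCovered.to_isEvenlyCovered_preimage
      (IsEvenlyCovered.of_trivialization (t := NVCover.triv f V hVopen hd x₀ hx₀) hx₀)
  · -- fibers description
    intro x
    ext z
    simp only [Set.mem_preimage, Set.mem_singleton_iff, Set.mem_setOf_eq, NVGraph.q]
    exact ⟨fun h => ⟨h, h ▸ z.2⟩, fun h => h.1⟩
  · -- cardinality of fibers
    intro x
    obtain ⟨b, hb⟩ := Quotient.exists_rep (f x)
    have hv : UnordConf.values (f x) = Set.range b.1 := by rw [← hb]; rfl
    have e1 : (NVGraph.q (f := f) ⁻¹' {x}) ≃ (UnordConf.values (f x)) :=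
      { toFun := fun z => ⟨z.1.1.2, by
          have h2 := z.1.2
          rwa [show z.1.1.1 = x from z.2] at h2⟩
        invFun := fun y => ⟨⟨(x, y.1), y.2⟩, rfl⟩
        left_inv := fun z => Subtype.ext (Subtype.ext (Prod.ext (z.2 : _).symm rfl))
        right_inv := fun y => rfl }
    have e2 : (UnordConf.values (f x)) ≃ Fin n :=
      (Equiv.setCongr hv).trans (Equiv.ofInjective b.1 b.2).symm
    rw [Nat.card_congr (e1.trans e2), Nat.card_eq_fintype_card, Fintype.card_fin]
end

section
/- Let A = [[1,0],[3,4]] and B = [[-1,0],[1,4]] be 2×2 integer matrices, let T² = ℝ²/ℤ² with covering p²: ℝ² → T², and define g = f_{2,A} and h(p²(t)) = {p²(f^1_{2,B}(t) + (1/4, 0)), p²(f^2_{2,B}(t) + (1/4, 0))}, where f^k_{2,M}(t) = (1/2)(Mt + k(1,1)). Then for every t ∈ ℝ², the four points p²(f^1_{2,A}(t)), p²(f^2_{2,A}(t)), p²(f^1_{2,B}(t) + (1/4,0)), p²(f^2_{2,B}(t) + (1/4,0)) are pairwise distinct; consequently g(x) ∩ h(x) = ∅ for all x ∈ T², and f(x)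 = g(x) ∪ h(x) defines a 4-valued map f: T² → D_4(T²) with partition f = {g, h}. -/
open Function Set

/-- The `q`-torus `ℝ^q/ℤ^q`. -/
abbrev Torus (q : ℕ) := Fin q → AddCircle (1 : ℝ)

/-- The universal covering projection `ℝ^q → T^q`, `t ↦ t mod 1`. -/
noncomputable def torusProj {q : ℕ} (t : Fin q → ℝ) : Torus q := fun i => (t i : AddCircle (1 : ℝ))

/-- The affine lift `f^k_{n,A}(t) = (1/n)(At + k·c)`, where `c = (1,…,1)`. -/
noncomputable def linLift {q : ℕ} (n : ℕ) (A : Matrix (Fin q) (Fin q) ℤ) (k : ℤ) (t : Fin q → ℝ) :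
    Fin q → ℝ :=
  fun i => (1 / (n : ℝ)) * ((A.map (Int.cast : ℤ → ℝ)).mulVec t i + (k : ℝ))

/-- `f` is (a representative of) the linear `n`-valued torus map `f_{n,A}` induced by `A`:
its value at `p^q(t)` is `{p^q(f^1_{n,A}(t)), …, p^q(f^n_{n,A}(t))}`. -/
def IsLinearNV {q : ℕ} (n : ℕ) (A : Matrix (Fin q) (Fin q) ℤ)
    (f : NValuedMap (Torus q) (Torus q) n) : Prop :=
  ∀ t : Fin q → ℝ,
    UnordConf.values (f (torusProj t)) =
      Set.range fun k : Fin n => torusProj (linLift n A ((k : ℕ) + 1) t)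

/-- `f` has a proper partition: a partition into at least two multimaps. -/
def HasProperPartition {X Y : Type*} [TopologicalSpace X] [TopologicalSpace Y] {n : ℕ}
    (f : NValuedMap X Y n) : Prop :=
  ∃ l : ℕ, 2 ≤ l ∧ Nonempty (NVPartition f l)

section AuxHelpers

open Matrix

lemma tp_eq_iff {u v : Fin 2 → ℝ} :
    torusProj u = torusProj v ↔ ∀ i, ∃ n : ℤ, u i - v i = (n : ℝ) := by
  constructor
  · intro h i
    have h' : ((u i : ℝ) : AddCircle (1 : ℝ)) = ((v i : ℝ) : AddCircle (1 : ℝ)) := congrFun h i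
    rw [QuotientAddGroup.eq_iff_sub_mem] at h'
    obtain ⟨n, hn⟩ := AddSubgroup.mem_zmultiples_iff.mp h'
    exact ⟨n, by simpa using hn.symm⟩
  · intro h
    funext i
    obtain ⟨n, hn⟩ := h i
    show ((u i : ℝ) : AddCircle (1 : ℝ)) = ((v i : ℝ) : AddCircle (1 : ℝ))
    rw [QuotientAddGroup.eq_iff_sub_mem]
    exact AddSubgroup.mem_zmultiples_iff.mpr ⟨n, by simpa using hn.symm⟩

lemma tp_of (u v : Fin 2 → ℝ) (n0 n1 : ℤ)
    (h0 : u 0 - v 0 = (n0 : ℝ)) (h1 : u 1 - v 1 = (n1 : ℝ)) :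
    torusProj u = torusProj v := by
  rw [tp_eq_iff]
  intro i
  fin_cases i
  · exact ⟨n0, h0⟩
  · exact ⟨n1, h1⟩

lemma lin_apply (M : Matrix (Fin 2) (Fin 2) ℤ) (k : ℤ) (t : Fin 2 → ℝ) (i : Fin 2) :
    linLift 2 M k t i = ((M i 0 : ℝ) * t 0 + (M i 1 : ℝ) * t 1 + (k : ℝ)) / 2 := by
  simp [linLift, Matrix.mulVec, dotProduct, Fin.sum_univ_two, Matrix.map_apply]
  ring

lemma int_contra (n0 n1 : ℤ)
    (h : (2 * (n0 : ℝ)) = -1 ∨ (2 * (n0 : ℝ)) = 1 ∨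
      4 * (n1 : ℝ) - 4 * (n0 : ℝ) = 1 ∨ 4 * (n1 : ℝ) - 4 * (n0 : ℝ) = -1) :
    False := by
  rcases h with h | h | h | h
  · have : (2 * n0 : ℤ) = -1 := by exact_mod_cast h
    omega
  · have : (2 * n0 : ℤ) = 1 := by exact_mod_cast h
    omega
  · have : (4 * n1 - 4 * n0 : ℤ) = 1 := by exact_mod_cast h
    omega
  · have : (4 * n1 - 4 * n0 : ℤ) = -1 := by exact_mod_cast h
    omega

/-- The 4-tuple of torus points. -/
noncomputable def tup (t : Fin 2 → ℝ) : Fin 4 → Torus 2 :=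
  ![torusProj (linLift 2 !![1, 0; 3, 4] 1 t), torusProj (linLift 2 !![1, 0; 3, 4] 2 t),
    torusProj fun i => linLift 2 !![-1, 0; 1, 4] 1 t i + ![1/4, 0] i,
    torusProj fun i => linLift 2 !![-1, 0; 1, 4] 2 t i + ![1/4, 0] i]

lemma key (t : Fin 2 → ℝ) : Function.Injective (tup t) := by
  intro i j hij
  fin_cases i <;> fin_cases j <;>
    first
    | rfl
    | (exfalso
       simp [tup] at hij
       rw [tp_eq_iff] at hij
       obtain ⟨n0, h0⟩ := hij 0
       obtain ⟨n1, h1⟩ := hij 1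
       simp [lin_apply] at h0 h1
       refine int_contra n0 n1 ?_
       first
       | (left; linarith)
       | (right; left; linarith)
       | (right; right; left; linarith)
       | (right; right; right; linarith))

noncomputable def Fmap (t : Fin 2 → ℝ) : UnordConf 4 (Torus 2) :=
  Quotient.mk (confSetoid 4 (Torus 2)) ⟨tup t, key t⟩

lemma Fmap_values (t : Fin 2 → ℝ) : UnordConf.values (Fmap t) = Set.range (tup t) := rfl

lemma Fmap_inv {t t' : Fin 2 → ℝ} (h : torusProj t = torusProj t') : Fmap t = Fmap t' := by
  obtain ⟨m, hm⟩ : ∃ m : Fin 2 → ℤ, ∀ i, t i - t' i = ((m i : ℤ) : ℝ) := by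
    choose m hm using tp_eq_iff.mp h
    exact ⟨m, hm⟩
  have hm0 := hm 0
  have hm1 := hm 1
  rcases Int.even_or_odd (m 0) with ⟨a, ha⟩ | ⟨a, ha⟩
  · -- even case : m 0 = a + a, the tuples agree entry-wise
    have ha' : ((m 0 : ℤ) : ℝ) = (a : ℝ) + (a : ℝ) := by exact_mod_cast ha
    have he : tup t = tup t' := by
      funext j
      fin_cases j
      · exact tp_of _ _ a (3 * a + 2 * m 1)
          (by simp [lin_apply]; push_cast; linarith)
          (by simp [lin_apply]; push_cast; linarith)
      · exact tp_of _ _ a (3 * a + 2 * m 1)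
          (by simp [lin_apply]; push_cast; linarith)
          (by simp [lin_apply]; push_cast; linarith)
      · exact tp_of _ _ (-a) (a + 2 * m 1)
          (by simp [lin_apply]; push_cast; linarith)
          (by simp [lin_apply]; push_cast; linarith)
      · exact tp_of _ _ (-a) (a + 2 * m 1)
          (by simp [lin_apply]; push_cast; linarith)
          (by simp [lin_apply]; push_cast; linarith)
    unfold Fmap
    exact congrArg _ (Subtype.ext he)
  · -- odd case : m 0 = 2 * a + 1, the tuples agree up to the swap (0 1)(2 3)
    have ha' : ((m 0 : ℤ) : ℝ) = 2 * (a : ℝ) + 1 := by exact_mod_cast ha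
    have e0 : tup t 0 = tup t' 1 := by
      show torusProj _ = torusProj _
      exact tp_of _ _ a (3 * a + 1 + 2 * m 1)
        (by simp [lin_apply]; push_cast; linarith)
        (by simp [lin_apply]; push_cast; linarith)
    have e1 : tup t 1 = tup t' 0 := by
      show torusProj _ = torusProj _
      exact tp_of _ _ (a + 1) (3 * a + 2 + 2 * m 1)
        (by simp [lin_apply]; push_cast; linarith)
        (by simp [lin_apply]; push_cast; linarith)
    have e2 : tup t 2 = tup t' 3 := by
      show torusProj _ = torusProj _
      exact tp_of _ _ (-a - 1) (a + 2 * m 1)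
        (by simp [lin_apply]; push_cast; linarith)
        (by simp [lin_apply]; push_cast; linarith)
    have e3 : tup t 3 = tup t' 2 := by
      show torusProj _ = torusProj _
      exact tp_of _ _ (-a) (a + 1 + 2 * m 1)
        (by simp [lin_apply]; push_cast; linarith)
        (by simp [lin_apply]; push_cast; linarith)
    apply Quotient.sound
    refine ⟨(Equiv.swap 0 1).trans (Equiv.swap 2 3), funext fun j => ?_⟩
    fin_cases j
    · simpa [show ((Equiv.swap 0 1).trans (Equiv.swap 2 3) : Equiv.Perm (Fin 4)) 0 = 1
        from by decide, Equiv.swap_apply_def] using e1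
    · simpa [show ((Equiv.swap 0 1).trans (Equiv.swap 2 3) : Equiv.Perm (Fin 4)) 1 = 0
        from by decide, Equiv.swap_apply_def] using e0
    · simpa [show ((Equiv.swap 0 1).trans (Equiv.swap 2 3) : Equiv.Perm (Fin 4)) 2 = 3
        from by decide, Equiv.swap_apply_def] using e3
    · simpa [show ((Equiv.swap 0 1).trans (Equiv.swap 2 3) : Equiv.Perm (Fin 4)) 3 = 2
        from by decide, Equiv.swap_apply_def] using e2

lemma tp_oqm : IsOpenQuotientMap (torusProj (q := 2)) := by
  have : torusProj (q := 2) =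
      Pi.map fun _ : Fin 2 => (QuotientAddGroup.mk : ℝ → AddCircle (1 : ℝ)) := rfl
  rw [this]
  exact IsOpenQuotientMap.piMap fun _ => QuotientAddGroup.isOpenQuotientMap_mk

lemma tp_surj : Function.Surjective (torusProj (q := 2)) := tp_oqm.surjective

lemma cont_lin (M : Matrix (Fin 2) (Fin 2) ℤ) (k : ℤ) :
    Continuous fun t : Fin 2 → ℝ => linLift 2 M k t := by
  refine continuous_pi fun i => ?_
  simp only [lin_apply]
  fun_prop

lemma cont_lin' (M : Matrix (Fin 2) (Fin 2) ℤ) (k : ℤ) (w : Fin 2 → ℝ) :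
    Continuous fun t : Fin 2 → ℝ => (fun i => linLift 2 M k t i + w i) := by
  refine continuous_pi fun i => ?_
  simp only [lin_apply]
  fun_prop

lemma Fmap_cont : Continuous Fmap := by
  have h1 : Continuous fun t : Fin 2 → ℝ => tup t := by
    refine continuous_pi fun j => ?_
    fin_cases j <;>
      simp only [tup, Matrix.cons_val_zero, Matrix.cons_val_one, Matrix.head_cons,
        Matrix.cons_val_two, Matrix.tail_cons, Matrix.cons_val_three, Fin.mk_one, Fin.isValue]
    · exact tp_oqm.continuous.comp (cont_lin _ _)
    · exact tp_oqm.continuous.comp (cont_lin _ _)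
    · exact tp_oqm.continuous.comp (cont_lin' _ _ _)
    · exact tp_oqm.continuous.comp (cont_lin' _ _ _)
  exact Continuous.comp continuous_quot_mk (Continuous.subtype_mk h1 _)

noncomputable def fbig : NValuedMap (Torus 2) (Torus 2) 4 where
  toFun x := Fmap (Function.surjInv tp_surj x)
  continuous_toFun := by
    rw [tp_oqm.isQuotientMap.continuous_iff]
    have : (fun x => Fmap (Function.surjInv tp_surj x)) ∘ torusProj = Fmap := by
      funext t
      exact Fmap_inv (Function.surjInv_eq tp_surj (torusProj t))
    rw [this]
    exact Fmap_cont

lemma fbig_apply (t : Fin 2 → ℝ) : fbig (torusProj t) = Fmap t :=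
  Fmap_inv (Function.surjInv_eq tp_surj (torusProj t))

end AuxHelpers

open Matrix in
theorem statement_17
    (A : Matrix (Fin 2) (Fin 2) ℤ) (B : Matrix (Fin 2) (Fin 2) ℤ)
    (hA : A = !![1, 0; 3, 4]) (hB : B = !![-1, 0; 1, 4])
    (w : Fin 2 → ℝ) (hw : w = ![1/4, 0]) :
    (∀ t : Fin 2 → ℝ,
      Function.Injective
        (![torusProj (linLift 2 A 1 t), torusProj (linLift 2 A 2 t),
           torusProj fun i => linLift 2 B 1 t i + w i,
           torusProj fun i => linLift 2 B 2 t i + w i] : Fin 4 → Torus 2)) ∧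
    ∀ (g h : NValuedMap (Torus 2) (Torus 2) 2),
      (∀ t : Fin 2 → ℝ,
        UnordConf.values (g (torusProj t)) =
          Set.range fun k : Fin 2 => torusProj (linLift 2 A ((k : ℕ) + 1) t)) →
      (∀ t : Fin 2 → ℝ,
        UnordConf.values (h (torusProj t)) =
          Set.range fun k : Fin 2 => torusProj fun i => linLift 2 B ((k : ℕ) + 1) t i + w i) →
      (∀ x : Torus 2, UnordConf.values (g x) ∩ UnordConf.values (h x) = ∅) ∧
      ∃ f : NValuedMap (Torus 2) (Torus 2) 4,
        ∀ x : Torus 2,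
          UnordConf.values (f x) = UnordConf.values (g x) ∪ UnordConf.values (h x) := by
  subst hA hB hw
  constructor
  · exact key
  · intro g h hg hh
    constructor
    · intro x
      obtain ⟨t, rfl⟩ := tp_surj x
      rw [Set.eq_empty_iff_forall_notMem]
      intro y hy
      rw [hg t, hh t] at hy
      obtain ⟨⟨k1, hk1⟩, ⟨k2, hk2⟩⟩ := hy
      fin_cases k1 <;> fin_cases k2 <;>
        (norm_num at hk1 hk2
         have h12 := tp_eq_iff.mp (hk1.trans hk2.symm)
         obtain ⟨n0, h0⟩ := h12 0
         obtain ⟨n1, h1⟩ := h12 1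
         simp [lin_apply] at h0 h1
         refine int_contra n0 n1 ?_
         first
         | (left; linarith)
         | (right; left; linarith)
         | (right; right; left; linarith)
         | (right; right; right; linarith))
    · refine ⟨fbig, fun x => ?_⟩
      obtain ⟨t, rfl⟩ := tp_surj x
      rw [hg t, hh t, fbig_apply t, Fmap_values]
      ext y
      constructor
      · rintro ⟨j, rfl⟩
        fin_cases j
        · exact Or.inl ⟨0, by norm_num [tup]⟩
        · exact Or.inl ⟨1, by norm_num [tup]⟩
        · exact Or.inr ⟨0, by norm_num [tup]⟩
        · exact Or.inr ⟨1, by norm_num [tup]⟩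
      · rintro (⟨k, rfl⟩ | ⟨k, rfl⟩) <;> fin_cases k
        · exact ⟨0, by norm_num [tup]⟩
        · exact ⟨1, by norm_num [tup]⟩
        · exact ⟨2, by norm_num [tup]; rfl⟩
        · exact ⟨3, by norm_num [tup]; rfl⟩
end
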